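/- Let R be a commutative unital ring and r ≥ 1, n ≥ 1 natural numbers. The n-th cyclic power of the free module R^r is free of rank equal to the necklace number: T^n_C(R^r) ≅ R^{c_{r,n}}, where c_{r,n} = (1/n) ∑_{d | n} φ(d) · r^{n/d} and φ is Euler's totient function. -/

import Mathlib

open TensorProduct PiTensorProduct

/-- The submodule of cyclic-rotation relations in the `n`-th tensor power:
`m_1⊗m_2⊗⋯⊗m_n − m_2⊗⋯⊗m_n⊗m_1`. -/
abbrev CycRel (R : Type*) [CommRing R] (M : Type*) [AddCommGroup M] [Module R M] (n : ℕ) :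
    Submodule R (TensorPower R n M) :=
  Submodule.span R {x | ∃ m : Fin n → M,
    x = tprod R m - tprod R (fun i => m (finRotate n i))}

/-- The `n`-th cyclic power `T^n_C M`. -/
abbrev CycPow (R : Type*) [CommRing R] (M : Type*) [AddCommGroup M] [Module R M] (n : ℕ) :=
  TensorPower R n M ⧸ CycRel R M n

namespace CycAux

variable (r n : ℕ)

def rotate (k : ZMod n) (w : ZMod n → Fin r) : ZMod n → Fin r := fun x => w (x + k)

instance : AddAction (ZMod n) (ZMod n → Fin r) where
  vadd := rotate r n
  zero_vadd w := funext fun x => congrArg w (add_zero x)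
  add_vadd k l w := funext fun x => congrArg w (add_assoc x k l).symm

/-- `Fin n ≃ ZMod n`. -/
def zEquiv [NeZero n] : Fin n ≃ ZMod n where
  toFun i := (i : ℕ)
  invFun k := ⟨k.val, k.val_lt⟩
  left_inv i := Fin.ext (ZMod.val_natCast_of_lt i.isLt)
  right_inv k := ZMod.natCast_rightInverse k

lemma zEquiv_finRotate [NeZero n] (i : Fin n) :
    zEquiv n (finRotate n i) = zEquiv n i + 1 := by
  rcases n with _ | m
  · exact absurd rfl (NeZero.ne 0)
  · show (((finRotate (m+1) i : Fin (m+1)) : ℕ) : ZMod (m+1)) = ((i : ℕ) : ZMod (m+1)) + 1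
    rw [finRotate_succ_apply, Fin.add_def]
    rw [ZMod.natCast_mod, Nat.cast_add, Fin.val_one', ZMod.natCast_mod, Nat.cast_one]

variable (R : Type) [CommRing R]

/-- basis vectors of `Fin r → R`. -/
def e (j : Fin r) : Fin r → R := Pi.single j 1

/-- basis pure tensors of the tensor power. -/
noncomputable def B (w : Fin n → Fin r) : TensorPower R n (Fin r → R) :=
  tprod R (fun i => e r R (w i))

/-- transfer between word types -/
def T [NeZero n] : (Fin n → Fin r) ≃ (ZMod n → Fin r) :=
  Equiv.arrowCongr (zEquiv n) (Equiv.refl _)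

lemma T_rot [NeZero n] (w : Fin n → Fin r) :
    T r n (fun i => w (finRotate n i)) = (1 : ZMod n) +ᵥ T r n w := by
  funext x
  show w (finRotate n ((zEquiv n).symm x)) = w ((zEquiv n).symm (x + 1))
  congr 1
  apply (zEquiv n).injective
  rw [zEquiv_finRotate, Equiv.apply_symm_apply, Equiv.apply_symm_apply]

/-- The orbit space of necklaces. -/
abbrev Om [NeZero n] : Type := AddAction.orbitRel.Quotient (ZMod n) (ZMod n → Fin r)

/-- Class of a word in the orbit space. -/
def q [NeZero n] (w : Fin n → Fin r) : Om r n :=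
  Quotient.mk (AddAction.orbitRel (ZMod n) (ZMod n → Fin r)) (T r n w)

lemma q_rot [NeZero n] (w : Fin n → Fin r) :
    q r n (fun i => w (finRotate n i)) = q r n w := by
  apply Quotient.sound
  show _ ∈ AddAction.orbit (ZMod n) (T r n w)
  rw [T_rot]
  exact AddAction.mem_orbit _ _

/-- quotient map of the tensor power -/
noncomputable def piQ : TensorPower R n (Fin r → R) →ₗ[R] CycPow R (Fin r → R) n :=
  (CycRel R (Fin r → R) n).mkQ

lemma piQ_step (w : Fin n → Fin r) :
    piQ r n R (B r n R (fun i => w (finRotate n i))) = piQ r n R (B r n R w) := by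
  symm
  apply (Submodule.Quotient.eq _).mpr
  apply Submodule.subset_span
  exact ⟨fun i => e r R (w i), rfl⟩

lemma piQ_iterate (c : ℕ) (w : Fin n → Fin r) :
    piQ r n R (B r n R (fun i => w ((finRotate n)^[c] i))) = piQ r n R (B r n R w) := by
  induction c generalizing w with
  | zero => simp
  | succ c ih =>
      have h1 : (fun i => w ((finRotate n)^[c+1] i)) =
          (fun i => (fun j => w ((finRotate n)^[c] j)) (finRotate n i)) := by
        funext i
        exact congrArg w (Function.iterate_succ_apply (finRotate n) c i)
      rw [h1]
      exact (piQ_step r n R (fun j => w ((finRotate n)^[c] j))).trans (ih _)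

lemma T_iterate [NeZero n] (c : ℕ) (w : Fin n → Fin r) :
    T r n (fun i => w ((finRotate n)^[c] i)) = (c : ZMod n) +ᵥ T r n w := by
  induction c generalizing w with
  | zero => simp
  | succ c ih =>
      have h1 : (fun i => w ((finRotate n)^[c+1] i)) =
          (fun i => (fun j => w (finRotate n j)) ((finRotate n)^[c] i)) := by
        funext i
        exact congrArg w (Function.iterate_succ_apply' (finRotate n) c i)
      rw [h1, ih (fun j => w (finRotate n j)), T_rot, ← add_vadd]
      push_cast
      rw [add_comm]

lemma q_eq_imp [NeZero n] (w v : Fin n → Fin r) (h : q r n w = q r n v) :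
    piQ r n R (B r n R w) = piQ r n R (B r n R v) := by
  have h2 : T r n w ∈ AddAction.orbit (ZMod n) (T r n v) := Quotient.exact h
  rw [AddAction.mem_orbit_iff] at h2
  obtain ⟨k, hk⟩ := h2
  have hk' : ((k.val : ℕ) : ZMod n) +ᵥ T r n v = T r n w := by
    rwa [ZMod.natCast_rightInverse k]
  rw [← T_iterate] at hk'
  have hw : w = fun i => v ((finRotate n)^[k.val] i) := (T r n).injective hk'.symm
  rw [hw, piQ_iterate]

/-- coefficient multilinear form -/
noncomputable def mu (w : Fin n → Fin r) :
    MultilinearMap R (fun _ : Fin n => (Fin r → R)) R :=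
  (MultilinearMap.mkPiAlgebra R (Fin n) R).compLinearMap fun i => LinearMap.proj (w i)

lemma mu_apply (w : Fin n → Fin r) (m : Fin n → (Fin r → R)) :
    mu r n R w m = ∏ i, m i (w i) := by
  simp [mu]

/-- the map from the tensor power to the free module on necklaces -/
noncomputable def F [NeZero n] : TensorPower R n (Fin r → R) →ₗ[R] (Om r n →₀ R) :=
  ∑ w : Fin n → Fin r, (Finsupp.lsingle (q r n w)).comp (PiTensorProduct.lift (mu r n R w))

lemma F_tprod [NeZero n] (m : Fin n → (Fin r → R)) :
    F r n R (tprod R m) = ∑ w : Fin n → Fin r, Finsupp.single (q r n w) (∏ i, m i (w i)) := by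
  simp [F, mu_apply]

lemma prod_ite_eq_ite (w v : Fin n → Fin r) :
    (∏ i, if w i = v i then (1 : R) else 0) = if w = v then 1 else 0 := by
  classical
  by_cases h : w = v
  · subst h; simp
  · rw [if_neg h]
    obtain ⟨i, hi⟩ := Function.ne_iff.mp h
    exact Finset.prod_eq_zero (Finset.mem_univ i) (if_neg hi)

lemma e_apply (j k : Fin r) : e r R j k = if k = j then 1 else 0 := Pi.single_apply j 1 k

lemma F_B [NeZero n] (v : Fin n → Fin r) :
    F r n R (B r n R v) = Finsupp.single (q r n v) 1 := by
  classical
  rw [B, F_tprod]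
  have h1 : ∀ w : Fin n → Fin r, Finsupp.single (q r n w) (∏ i, e r R (v i) (w i)) =
      if w = v then Finsupp.single (q r n w) 1 else 0 := by
    intro w
    have : (∏ i, e r R (v i) (w i)) = if w = v then (1:R) else 0 := by
      rw [← prod_ite_eq_ite r n R w v]
      apply Finset.prod_congr rfl
      intro i _
      rw [e_apply]
    rw [this]
    by_cases h : w = v
    · rw [if_pos h, if_pos h]
    · rw [if_neg h, if_neg h, Finsupp.single_zero]
  rw [Finset.sum_congr rfl fun w _ => h1 w, Finset.sum_ite_eq' Finset.univ v
    (fun w => Finsupp.single (q r n w) 1), if_pos (Finset.mem_univ v)]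

lemma pi_expand (x : Fin r → R) : x = ∑ j : Fin r, x j • e r R j := by
  funext k
  classical
  rw [Finset.sum_apply]
  simp [e_apply]

lemma tprod_expand (m : Fin n → (Fin r → R)) :
    tprod R m = ∑ w : Fin n → Fin r, (∏ i, m i (w i)) • B r n R w := by
  classical
  calc tprod R m = tprod R (fun i => ∑ j : Fin r, m i j • e r R j) := by
        congr 1
        funext i
        exact pi_expand r R (m i)
    _ = ∑ w : Fin n → Fin r, tprod R (fun i => m i (w i) • e r R (w i)) :=
        MultilinearMap.map_sum (PiTensorProduct.tprod R) (fun i j => m i j • e r R j)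
    _ = ∑ w : Fin n → Fin r, (∏ i, m i (w i)) • B r n R w := by
        apply Finset.sum_congr rfl
        intro w _
        exact MultilinearMap.map_smul_univ (PiTensorProduct.tprod R) (fun i => m i (w i)) (fun i => e r R (w i))

lemma F_rot [NeZero n] (m : Fin n → (Fin r → R)) :
    F r n R (tprod R (fun i => m (finRotate n i))) = F r n R (tprod R m) := by
  classical
  rw [F_tprod, F_tprod]
  apply Fintype.sum_equiv (Equiv.arrowCongr (finRotate n) (Equiv.refl (Fin r)))
  intro x
  have hq : q r n (fun i => x ((finRotate n).symm i)) = q r n x := by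
    have := q_rot r n (fun i => x ((finRotate n).symm i))
    simp only [Equiv.symm_apply_apply] at this
    rw [← this]
  have hp : (∏ i, m i (x ((finRotate n).symm i))) = ∏ i, m (finRotate n i) (x i) := by
    rw [← Equiv.prod_comp (finRotate n) (fun i => m i (x ((finRotate n).symm i)))]
    apply Finset.prod_congr rfl
    intro i _
    simp
  show Finsupp.single (q r n x) (∏ i, m (finRotate n i) (x i)) =
    Finsupp.single (q r n (fun i => x ((finRotate n).symm i)))
      (∏ i, m i (x ((finRotate n).symm i)))
  rw [hq, hp]

lemma F_rel [NeZero n] : CycRel R (Fin r → R) n ≤ LinearMap.ker (F r n R) := by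
  rw [Submodule.span_le]
  rintro x ⟨m, rfl⟩
  simp only [SetLike.mem_coe, LinearMap.mem_ker, map_sub]
  rw [F_rot]
  exact sub_self _

/-- induced map on the cyclic power -/
noncomputable def Fbar [NeZero n] : CycPow R (Fin r → R) n →ₗ[R] (Om r n →₀ R) :=
  Submodule.liftQ _ (F r n R) (F_rel r n R)

/-- representatives -/
noncomputable def g0 [NeZero n] : Om r n → CycPow R (Fin r → R) n :=
  Quotient.lift (fun w' => piQ r n R (B r n R ((T r n).symm w'))) (by
    intro a b hab
    have h : q r n ((T r n).symm a) = q r n ((T r n).symm b) := by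
      unfold q
      rw [Equiv.apply_symm_apply, Equiv.apply_symm_apply]
      exact Quotient.sound hab
    exact q_eq_imp r n R _ _ h)

lemma g0_q [NeZero n] (w : Fin n → Fin r) : g0 r n R (q r n w) = piQ r n R (B r n R w) := by
  unfold g0 q
  rw [Quotient.lift_mk]
  rw [Equiv.symm_apply_apply]

/-- the inverse map -/
noncomputable def G [NeZero n] : (Om r n →₀ R) →ₗ[R] CycPow R (Fin r → R) n :=
  Finsupp.linearCombination R (g0 r n R)

lemma FbarG [NeZero n] : (Fbar r n R).comp (G r n R) = LinearMap.id := by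
  apply Finsupp.lhom_ext
  intro a b
  induction a using Quotient.inductionOn with
  | h w' =>
    have ha : Quotient.mk (AddAction.orbitRel (ZMod n) (ZMod n → Fin r)) w'
        = q r n ((T r n).symm w') := by
      unfold q
      rw [Equiv.apply_symm_apply]
    rw [LinearMap.comp_apply, LinearMap.id_apply]
    unfold G
    rw [Finsupp.linearCombination_single, ha, g0_q, map_smul]
    unfold Fbar piQ
    rw [Submodule.mkQ_apply, Submodule.liftQ_apply, F_B, Finsupp.smul_single, smul_eq_mul, mul_one]

lemma GFbar [NeZero n] : (G r n R).comp (Fbar r n R) = LinearMap.id := by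
  have main : ((G r n R).comp (Fbar r n R)).comp (piQ r n R) = piQ r n R := by
    apply PiTensorProduct.ext
    apply MultilinearMap.ext
    intro m
    simp only [LinearMap.compMultilinearMap_apply, LinearMap.comp_apply]
    unfold Fbar piQ
    rw [Submodule.mkQ_apply, Submodule.liftQ_apply, F_tprod, map_sum]
    have h1 : ∀ w : Fin n → Fin r,
        G r n R (Finsupp.single (q r n w) (∏ i, m i (w i))) =
        (∏ i, m i (w i)) • (CycRel R (Fin r → R) n).mkQ (B r n R w) := by
      intro w
      unfold G
      rw [Finsupp.linearCombination_single, g0_q]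
      rfl
    rw [Finset.sum_congr rfl fun w _ => h1 w]
    conv_rhs => rw [tprod_expand r n R m, ← Submodule.mkQ_apply, map_sum]
    apply Finset.sum_congr rfl
    intro w _
    rw [map_smul]
  apply LinearMap.ext
  intro x
  obtain ⟨y, rfl⟩ := Submodule.mkQ_surjective _ x
  exact LinearMap.congr_fun main y

/-- The cyclic power is the free module on necklaces. -/
noncomputable def cycEquiv [NeZero n] : CycPow R (Fin r → R) n ≃ₗ[R] (Om r n →₀ R) :=
  LinearEquiv.ofLinear (Fbar r n R) (G r n R) (FbarG r n R) (GFbar r n R)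

lemma vadd_apply (k : ZMod n) (w : ZMod n → Fin r) (x : ZMod n) : (k +ᵥ w) x = w (x + k) := rfl

lemma key_invariance {r n : ℕ} (a : ZMod n) (w : ZMod n → Fin r)
    (hw : ∀ x, w (x + a) = w x) : ∀ (z : ℤ) (x), w (x + z • a) = w x := by
  intro z
  induction z using Int.induction_on with
  | zero => simp
  | succ k ih =>
      intro x
      have h1 : ((k : ℤ) + 1) • a = (k : ℤ) • a + a := by rw [add_zsmul, one_zsmul]
      rw [h1, ← add_assoc, hw, ih]
  | pred k ih =>
      intro x
      have h1 : x + (-(k : ℤ) - 1) • a + a = x + (-(k : ℤ)) • a := by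
        rw [sub_zsmul, one_zsmul]
        abel
      calc w (x + (-(k : ℤ) - 1) • a) = w (x + (-(k : ℤ) - 1) • a + a) := (hw _).symm
        _ = w (x + (-(k : ℤ)) • a) := by rw [h1]
        _ = w x := ih x

/-- A word fixed by rotation by `a` factors through the quotient by multiples of `a`. -/
noncomputable def fixedEquiv (a : ZMod n) :
    (AddAction.fixedBy (ZMod n → Fin r) a) ≃ ((ZMod n ⧸ AddSubgroup.zmultiples a) → Fin r) where
  toFun := fun ⟨w, hw⟩ => fun x => Quotient.liftOn' x w (by
    intro b c hbc
    rw [QuotientAddGroup.leftRel_apply] at hbc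
    obtain ⟨z, hz⟩ := AddSubgroup.mem_zmultiples_iff.mp hbc
    have hc : c = b + z • a := by rw [hz]; abel
    have hw' : ∀ x, w (x + a) = w x := fun x => congrFun hw x
    rw [hc, key_invariance a w hw' z b])
  invFun := fun f => ⟨fun x => f ((x : ZMod n ⧸ AddSubgroup.zmultiples a)), by
    funext x
    show f ((((x + a : ZMod n)) : ZMod n ⧸ AddSubgroup.zmultiples a)) = f _
    congr 1
    apply (QuotientAddGroup.eq).mpr
    have : -(x + a) + x = -a := by abel
    rw [this]
    exact neg_mem (AddSubgroup.mem_zmultiples a)⟩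
  left_inv := fun ⟨w, hw⟩ => Subtype.ext (funext fun x => rfl)
  right_inv := fun f => funext fun x => by
    induction x using Quotient.inductionOn' with
    | h b => rfl

lemma card_fixedBy [NeZero n] (a : ZMod n) :
    Nat.card (AddAction.fixedBy (ZMod n → Fin r) a) = r ^ (n / addOrderOf a) := by
  rw [Nat.card_congr (fixedEquiv r n a)]
  have hq : Nat.card (ZMod n ⧸ AddSubgroup.zmultiples a) = n / addOrderOf a := by
    have h1 := AddSubgroup.card_eq_card_quotient_mul_card_addSubgroup (AddSubgroup.zmultiples a)
    rw [Nat.card_zmod, Nat.card_zmultiples] at h1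
    have ho : 0 < addOrderOf a := addOrderOf_pos a
    exact (Nat.div_eq_of_eq_mul_left ho h1).symm
  rw [Nat.card_fun, Nat.card_eq_fintype_card (α := Fin r), Fintype.card_fin, hq]

lemma necklace_count [NeZero n] :
    n * Nat.card (AddAction.orbitRel.Quotient (ZMod n) (ZMod n → Fin r)) =
      ∑ d ∈ n.divisors, Nat.totient d * r ^ (n / d) := by
  classical
  haveI : ∀ a : ZMod n, Fintype (AddAction.fixedBy (ZMod n → Fin r) a) :=
    fun a => Fintype.ofFinite _
  haveI : Fintype (AddAction.orbitRel.Quotient (ZMod n) (ZMod n → Fin r)) := Fintype.ofFinite _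
  have hb := AddAction.sum_card_fixedBy_eq_card_orbits_mul_card_addGroup (ZMod n) (ZMod n → Fin r)
  have hsum : (∑ a : ZMod n, Fintype.card (AddAction.fixedBy (ZMod n → Fin r) a)) =
      ∑ d ∈ n.divisors, Nat.totient d * r ^ (n / d) := by
    have h1 : ∀ a : ZMod n, Fintype.card (AddAction.fixedBy (ZMod n → Fin r) a) =
        r ^ (n / addOrderOf a) := by
      intro a
      rw [← Nat.card_eq_fintype_card, card_fixedBy]
    calc (∑ a : ZMod n, Fintype.card (AddAction.fixedBy (ZMod n → Fin r) a))
        = ∑ a : ZMod n, r ^ (n / addOrderOf a) := by simp only [h1]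
      _ = ∑ d ∈ n.divisors, ∑ a ∈ Finset.univ.filter (fun a : ZMod n => addOrderOf a = d),
            r ^ (n / addOrderOf a) := by
          rw [Finset.sum_fiberwise_of_maps_to]
          intro a _
          rw [Nat.mem_divisors]
          refine ⟨?_, NeZero.ne n⟩
          have := addOrderOf_dvd_card (x := a)
          rwa [ZMod.card] at this
      _ = ∑ d ∈ n.divisors, Nat.totient d * r ^ (n / d) := by
          apply Finset.sum_congr rfl
          intro d hd
          rw [Nat.mem_divisors] at hd
          have : ∑ a ∈ Finset.univ.filter (fun a : ZMod n => addOrderOf a = d),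
              r ^ (n / addOrderOf a) = ∑ a ∈ Finset.univ.filter
                (fun a : ZMod n => addOrderOf a = d), r ^ (n / d) := by
            apply Finset.sum_congr rfl
            intro a ha
            rw [Finset.mem_filter] at ha
            rw [ha.2]
          rw [this, Finset.sum_const, smul_eq_mul]
          congr 1
          have hdvd : d ∣ Fintype.card (ZMod n) := by rw [ZMod.card]; exact hd.1
          have := IsAddCyclic.card_addOrderOf_eq_totient (α := ZMod n) hdvd
          convert this using 2
  rw [← hsum, hb, ZMod.card, Nat.card_eq_fintype_card]
  ring


end CycAux

open CycAux in
/-- Let `R` be a commutative unital ring and `r, n ≥ 1`.  The `n`-th cyclic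
power of the free module `R^r` is free of rank the necklace number
`c_{r,n} = (1/n) ∑_{d ∣ n} φ(d) r^{n/d}`:  `T^n_C(R^r) ≅ R^{c_{r,n}}`. -/
theorem cyclicPower_free_module (R : Type) [CommRing R] (r n : ℕ) (hr : 1 ≤ r)
    (hn : 1 ≤ n) :
    ∃ c : ℕ, n * c = ∑ d ∈ n.divisors, Nat.totient d * r ^ (n / d) ∧
      Nonempty (CycPow R (Fin r → R) n ≃ₗ[R] (Fin c → R)) := by
  haveI : NeZero n := ⟨by omega⟩
  classical
  refine ⟨Nat.card (Om r n), necklace_count r n, ?_⟩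
  haveI : Fintype (Om r n) := Fintype.ofFinite _
  have hcard : Fintype.card (Om r n) = Nat.card (Om r n) := (Nat.card_eq_fintype_card).symm
  exact ⟨((cycEquiv r n R).trans (Finsupp.linearEquivFunOnFinite R R (Om r n))).trans
    (LinearEquiv.funCongrLeft R R ((Fintype.equivFinOfCardEq hcard).symm))⟩
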